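/- The element Λ # (1/n)·Σ_{i=0}^{n-1} g^i is a left integral of the smash product Hopf algebra H#𝕜G, and the counit of H#𝕜G takes the nonzero value ε(Λ) on it; consequently H#𝕜G is a semisimple Hopf algebra over 𝕜. -/

import Mathlib

open TensorProduct DirectSum

noncomputable section

/-- The character of a module `V` over a `k`-algebra `H`: the trace of the action of `h`. -/
def charLin (k H V : Type*) [CommRing k] [Ring H] [Algebra k H]
    [AddCommGroup V] [Module k V] [Module H V] [IsScalarTower k H V] [SMulCommClass H k V] :
    H →ₗ[k] k :=
  LinearMap.trace k V ∘ₗ (Algebra.lsmul k k V (A := H)).toLinearMap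

/-- Convolution product on the dual of a coalgebra. -/
def convP (k A : Type*) [CommRing k] [AddCommGroup A] [Module k A] [Coalgebra k A]
    (f g : A →ₗ[k] k) : A →ₗ[k] k :=
  LinearMap.mul' k k ∘ₗ TensorProduct.map f g ∘ₗ Coalgebra.comul

/-- The element `u = S(Λ₂)Λ₁` associated to an element `Λ` of a Hopf algebra. -/
def uElt (k H : Type*) [CommRing k] [Ring H] [HopfAlgebra k H] (Λ : H) : H :=
  LinearMap.mul' k H
    ((TensorProduct.map (HopfAlgebra.antipode (R := k)) LinearMap.id)
      ((TensorProduct.comm k H H) (Coalgebra.comul Λ)))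

/-- The star product `(f ⋆ g)(h) = (f ⊗ g)(Δ(h)Δ(v')(v ⊗ v))`, where `v'` plays
the role of `v⁻¹`. -/
def starP (k H : Type*) [CommRing k] [Ring H] [HopfAlgebra k H] (v v' : H)
    (f g : H →ₗ[k] k) : H →ₗ[k] k :=
  LinearMap.mul' k k ∘ₗ TensorProduct.map f g ∘ₗ
    (LinearMap.mulRight k ((Coalgebra.comul v') * (v ⊗ₜ[k] v)) ∘ₗ Coalgebra.comul)

/-- The character of the left regular representation of a finite-dimensional algebra. -/
def regChar (k A : Type*) [CommRing k] [Ring A] [Algebra k A] : A →ₗ[k] k :=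
  LinearMap.trace k A ∘ₗ LinearMap.mul k A


open Coalgebra HopfAlgebra LinearMap

section A1


variable {R : Type*} {A : Type*} [CommSemiring R]

section Coalg
variable [AddCommMonoid A] [Module R A] [Coalgebra R A]

lemma sum_counit_smul_eq' {ι : Type*} {a : A} (repr : Coalgebra.Repr R a ι) :
    ∑ i ∈ repr.index, counit (R := R) (repr.left i) • repr.right i = a := by
  have := sum_counit_tmul_eq repr
  apply_fun (TensorProduct.lid R A) at this
  simp only [map_sum, lid_tmul, one_smul] at this
  exact this

lemma sum_smul_counit_eq' {ι : Type*} {a : A} (repr : Coalgebra.Repr R a ι) :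
    ∑ i ∈ repr.index, counit (R := R) (repr.right i) • repr.left i = a := by
  have := sum_tmul_counit_eq repr
  apply_fun (TensorProduct.rid R A) at this
  simp only [map_sum, rid_tmul, one_smul] at this
  exact this

end Coalg

variable [Semiring A] [HopfAlgebra R A]

/-- A representation of `comul (a*b)` built from representations of `a` and `b`. -/
def Coalgebra.Repr.mulRepr {ι ι' : Type*} {a b : A} (ra : Coalgebra.Repr R a ι) (rb : Coalgebra.Repr R b ι') :
    Coalgebra.Repr R (a * b) (ι × ι') where
  index := ra.index ×ˢ rb.index
  left p := ra.left p.1 * rb.left p.2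
  right p := ra.right p.1 * rb.right p.2
  eq := by
    rw [Bialgebra.comul_mul, ← ra.eq, ← rb.eq, Finset.sum_mul_sum, Finset.sum_product]
    simp [Algebra.TensorProduct.tmul_mul_tmul]

lemma helper_l {ι : Type*} {y : A} (ry : Coalgebra.Repr R y ι) (X : A) :
    ∑ l ∈ ry.index, ry.left l * (antipode (R := R) (ry.right l) * X)
      = counit (R := R) y • X := by
  simp only [← mul_assoc, ← Finset.sum_mul]
  rw [sum_mul_antipode_eq_smul ry, smul_mul_assoc, one_mul]

lemma antipode_one' : antipode (R := R) (A := A) 1 = 1 := by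
  have := mul_antipode_rTensor_comul_apply (R := R) (a := (1 : A))
  simpa [Bialgebra.comul_one, Algebra.TensorProduct.one_def] using this

lemma counit_antipode' (a : A) :
    counit (R := R) (antipode (R := R) a) = counit (R := R) a := by
  have h := congrArg (counit (R := R)) (sum_antipode_mul_eq_algebraMap_counit (R := R) (ℛ R a))
  simp only [map_sum, Bialgebra.counit_mul, Bialgebra.counit_algebraMap] at h
  rw [← h]
  conv_lhs => rw [← sum_smul_counit_eq' (ℛ R a)]
  rw [map_sum, map_sum]
  apply Finset.sum_congr rfl
  intro i _
  rw [map_smul, map_smul, smul_eq_mul]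
  exact mul_comm (counit ((ℛ R a).right i)) (counit (antipode R ((ℛ R a).left i)))

lemma antipode_mul' (a b : A) :
    antipode (R := R) (a * b) = antipode (R := R) b * antipode (R := R) a := by
  classical
  set S : A →ₗ[R] A := antipode (R := R) with hS
  set ra := ℛ R a with hra
  set rb := ℛ R b with hrb
  set rla : (i : ra.ι) → Coalgebra.Repr R (ra.left i) (A × A) := fun i => ℛ R (ra.left i) with hrla
  set rra : (i : ra.ι) → Coalgebra.Repr R (ra.right i) (A × A) := fun i => ℛ R (ra.right i) with hrra
  set rlb : (j : rb.ι) → Coalgebra.Repr R (rb.left j) (A × A) := fun j => ℛ R (rb.left j) with hrlb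
  set rrb : (j : rb.ι) → Coalgebra.Repr R (rb.right j) (A × A) := fun j => ℛ R (rb.right j) with hrrb
  set Ψb : A ⊗[R] (A ⊗[R] A) →ₗ[R] A :=
    ∑ j ∈ rb.index, ∑ l ∈ (rrb j).index,
      mul' R A ∘ₗ (TensorProduct.map (S ∘ₗ mulRight R (rb.left j))
        (mul' R A ∘ₗ TensorProduct.map (mulRight R ((rrb j).left l))
          (mulLeft R (S ((rrb j).right l)) ∘ₗ S))) with hΨb
  set Ψa : A ⊗[R] (A ⊗[R] A) →ₗ[R] A :=
    ∑ i ∈ ra.index, ∑ k ∈ (rla i).index,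
      mul' R A ∘ₗ (TensorProduct.map (S ∘ₗ mulLeft R ((rla i).left k))
        (mul' R A ∘ₗ TensorProduct.map (mulLeft R ((rla i).right k))
          (mulRight R (S (ra.right i)) ∘ₗ S))) with hΨa
  have hΨbapp : ∀ (u v w : A), Ψb (u ⊗ₜ (v ⊗ₜ w)) =
      ∑ j ∈ rb.index, ∑ l ∈ (rrb j).index,
        S (u * rb.left j) * ((v * (rrb j).left l) *
          (S ((rrb j).right l) * S w)) := by
    intro u v w
    simp [hΨb, LinearMap.sum_apply, TensorProduct.map_tmul, mul'_apply]
  have hΨaapp : ∀ (u v w : A), Ψa (u ⊗ₜ (v ⊗ₜ w)) =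
      ∑ i ∈ ra.index, ∑ k ∈ (rla i).index,
        S ((rla i).left k * u) * (((rla i).right k * v) *
          (S w * S (ra.right i))) := by
    intro u v w
    simp [hΨa, LinearMap.sum_apply, TensorProduct.map_tmul, mul'_apply]
  have hCa := sum_tmul_tmul_eq (R := R) ra rla rra
  have hCb := sum_tmul_tmul_eq (R := R) rb rlb rrb
  -- Eval1 : Ψb (RHS hCa) = S (a*b)
  have Eval1 : Ψb (∑ i ∈ ra.index, ∑ k ∈ (rra i).index,
      ra.left i ⊗ₜ[R] ((rra i).left k ⊗ₜ[R] (rra i).right k)) = S (a * b) := by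
    rw [map_sum]
    calc ∑ i ∈ ra.index, Ψb (∑ k ∈ (rra i).index,
          ra.left i ⊗ₜ[R] ((rra i).left k ⊗ₜ[R] (rra i).right k))
        = ∑ i ∈ ra.index, ∑ k ∈ (rra i).index, ∑ j ∈ rb.index, ∑ l ∈ (rrb j).index,
            S (ra.left i * rb.left j) * (((rra i).left k * (rrb j).left l) *
              (S ((rrb j).right l) * S ((rra i).right k))) := by
          refine Finset.sum_congr rfl fun i _ => ?_
          rw [map_sum]
          exact Finset.sum_congr rfl fun k _ => hΨbapp _ _ _
      _ = ∑ i ∈ ra.index, ∑ j ∈ rb.index,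
            (counit (R := R) (ra.right i) * counit (R := R) (rb.right j)) •
              S (ra.left i * rb.left j) := by
          refine Finset.sum_congr rfl fun i _ => ?_
          rw [Finset.sum_comm]
          refine Finset.sum_congr rfl fun j _ => ?_
          calc ∑ k ∈ (rra i).index, ∑ l ∈ (rrb j).index,
                S (ra.left i * rb.left j) * (((rra i).left k * (rrb j).left l) *
                  (S ((rrb j).right l) * S ((rra i).right k)))
              = ∑ k ∈ (rra i).index,
                  S (ra.left i * rb.left j) * ((rra i).left k *
                    (counit (R := R) (rb.right j) • S ((rra i).right k))) := by
                refine Finset.sum_congr rfl fun k _ => ?_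
                rw [← Finset.mul_sum]
                congr 1
                simp only [mul_assoc]
                rw [← Finset.mul_sum]
                congr 1
                exact helper_l (rrb j) _
            _ = (counit (R := R) (ra.right i) * counit (R := R) (rb.right j)) •
                  S (ra.left i * rb.left j) := by
                simp only [mul_smul_comm, ← Finset.smul_sum, ← Finset.mul_sum]
                rw [sum_mul_antipode_eq_smul (rra i), mul_smul_comm, mul_one,
                  smul_smul, mul_comm (counit (R := R) (rb.right j))]
      _ = S (a * b) := by
          conv_rhs => rw [← sum_smul_counit_eq' ra, ← sum_smul_counit_eq' rb]
          rw [Finset.sum_mul_sum, map_sum]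
          refine Finset.sum_congr rfl fun i _ => ?_
          rw [map_sum]
          refine Finset.sum_congr rfl fun j _ => ?_
          rw [smul_mul_smul_comm, map_smul, mul_comm]
  -- canonical middle quadruple sum
  set X' : A := ∑ i ∈ ra.index, ∑ j ∈ rb.index, ∑ k ∈ (rla i).index, ∑ l ∈ (rrb j).index,
      S ((rla i).left k * rb.left j) * (((rla i).right k * (rrb j).left l) *
        (S ((rrb j).right l) * S (ra.right i))) with hX'
  have EvalCross1 : Ψb (∑ i ∈ ra.index, ∑ k ∈ (rla i).index,
      (rla i).left k ⊗ₜ[R] ((rla i).right k ⊗ₜ[R] ra.right i)) = X' := by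
    rw [map_sum]
    calc ∑ i ∈ ra.index, Ψb (∑ k ∈ (rla i).index,
          (rla i).left k ⊗ₜ[R] ((rla i).right k ⊗ₜ[R] ra.right i))
        = ∑ i ∈ ra.index, ∑ k ∈ (rla i).index, ∑ j ∈ rb.index, ∑ l ∈ (rrb j).index,
            S ((rla i).left k * rb.left j) * (((rla i).right k * (rrb j).left l) *
              (S ((rrb j).right l) * S (ra.right i))) := by
          refine Finset.sum_congr rfl fun i _ => ?_
          rw [map_sum]
          exact Finset.sum_congr rfl fun k _ => hΨbapp _ _ _
      _ = X' := by
          rw [hX']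
          exact Finset.sum_congr rfl fun i _ => Finset.sum_comm
  have EvalCross2 : Ψa (∑ j ∈ rb.index, ∑ l ∈ (rrb j).index,
      rb.left j ⊗ₜ[R] ((rrb j).left l ⊗ₜ[R] (rrb j).right l)) = X' := by
    rw [map_sum]
    calc ∑ j ∈ rb.index, Ψa (∑ l ∈ (rrb j).index,
          rb.left j ⊗ₜ[R] ((rrb j).left l ⊗ₜ[R] (rrb j).right l))
        = ∑ j ∈ rb.index, ∑ l ∈ (rrb j).index, ∑ i ∈ ra.index, ∑ k ∈ (rla i).index,
            S ((rla i).left k * rb.left j) * (((rla i).right k * (rrb j).left l) *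
              (S ((rrb j).right l) * S (ra.right i))) := by
          refine Finset.sum_congr rfl fun j _ => ?_
          rw [map_sum]
          exact Finset.sum_congr rfl fun l _ => hΨaapp _ _ _
      _ = ∑ j ∈ rb.index, ∑ i ∈ ra.index, ∑ l ∈ (rrb j).index, ∑ k ∈ (rla i).index,
            S ((rla i).left k * rb.left j) * (((rla i).right k * (rrb j).left l) *
              (S ((rrb j).right l) * S (ra.right i))) := by
          exact Finset.sum_congr rfl fun j _ => Finset.sum_comm
      _ = ∑ i ∈ ra.index, ∑ j ∈ rb.index, ∑ l ∈ (rrb j).index, ∑ k ∈ (rla i).index,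
            S ((rla i).left k * rb.left j) * (((rla i).right k * (rrb j).left l) *
              (S ((rrb j).right l) * S (ra.right i))) := Finset.sum_comm
      _ = X' := by
          rw [hX']
          exact Finset.sum_congr rfl fun i _ => Finset.sum_congr rfl fun j _ =>
            Finset.sum_comm
  have Eval3 : Ψa (∑ j ∈ rb.index, ∑ l ∈ (rlb j).index,
      (rlb j).left l ⊗ₜ[R] ((rlb j).right l ⊗ₜ[R] rb.right j)) = S b * S a := by
    rw [map_sum]
    calc ∑ j ∈ rb.index, Ψa (∑ l ∈ (rlb j).index,
          (rlb j).left l ⊗ₜ[R] ((rlb j).right l ⊗ₜ[R] rb.right j))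
        = ∑ j ∈ rb.index, ∑ l ∈ (rlb j).index, ∑ i ∈ ra.index, ∑ k ∈ (rla i).index,
            S ((rla i).left k * (rlb j).left l) * (((rla i).right k * (rlb j).right l) *
              (S (rb.right j) * S (ra.right i))) := by
          refine Finset.sum_congr rfl fun j _ => ?_
          rw [map_sum]
          exact Finset.sum_congr rfl fun l _ => hΨaapp _ _ _
      _ = ∑ j ∈ rb.index, ∑ i ∈ ra.index,
            (counit (R := R) (rb.left j) * counit (R := R) (ra.left i)) •
              (S (rb.right j) * S (ra.right i)) := by
          refine Finset.sum_congr rfl fun j _ => ?_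
          rw [Finset.sum_comm]
          refine Finset.sum_congr rfl fun i _ => ?_
          calc ∑ l ∈ (rlb j).index, ∑ k ∈ (rla i).index,
                S ((rla i).left k * (rlb j).left l) * (((rla i).right k * (rlb j).right l) *
                  (S (rb.right j) * S (ra.right i)))
              = ∑ k ∈ (rla i).index, ∑ l ∈ (rlb j).index,
                  (S ((rla i).left k * (rlb j).left l) * ((rla i).right k * (rlb j).right l)) *
                    (S (rb.right j) * S (ra.right i)) := by
                rw [Finset.sum_comm]
                exact Finset.sum_congr rfl fun k _ => Finset.sum_congr rfl fun l _ =>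
                  (mul_assoc _ _ _).symm
            _ = (∑ p ∈ ((rla i).mulRepr (rlb j)).index,
                  S (((rla i).mulRepr (rlb j)).left p) * (((rla i).mulRepr (rlb j)).right p)) *
                    (S (rb.right j) * S (ra.right i)) := by
                simp only [← Finset.sum_mul]
                congr 1
                exact (Finset.sum_product (s := (rla i).index) (t := (rlb j).index)
                  (f := fun p => S (((rla i).mulRepr (rlb j)).left p) *
                    ((rla i).mulRepr (rlb j)).right p)).symm
            _ = (counit (R := R) (ra.left i * rb.left j)) •
                  (S (rb.right j) * S (ra.right i)) := by
                rw [hS, sum_antipode_mul_eq_smul ((rla i).mulRepr (rlb j)), smul_mul_assoc, one_mul]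
            _ = (counit (R := R) (rb.left j) * counit (R := R) (ra.left i)) •
                  (S (rb.right j) * S (ra.right i)) := by
                rw [Bialgebra.counit_mul, mul_comm]
      _ = S b * S a := by
          conv_rhs => rw [← sum_counit_smul_eq' ra, ← sum_counit_smul_eq' rb]
          rw [map_sum, map_sum, Finset.sum_mul_sum]
          refine Finset.sum_congr rfl fun j _ => ?_
          refine Finset.sum_congr rfl fun i _ => ?_
          rw [map_smul, map_smul, smul_mul_smul_comm]
  calc S (a * b) = Ψb (∑ i ∈ ra.index, ∑ k ∈ (rra i).index,
        ra.left i ⊗ₜ[R] ((rra i).left k ⊗ₜ[R] (rra i).right k)) := Eval1.symm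
    _ = Ψb (∑ i ∈ ra.index, ∑ k ∈ (rla i).index,
        (rla i).left k ⊗ₜ[R] ((rla i).right k ⊗ₜ[R] ra.right i)) := (congrArg _ hCa).symm
    _ = X' := EvalCross1
    _ = Ψa (∑ j ∈ rb.index, ∑ l ∈ (rrb j).index,
        rb.left j ⊗ₜ[R] ((rrb j).left l ⊗ₜ[R] (rrb j).right l)) := EvalCross2.symm
    _ = Ψa (∑ j ∈ rb.index, ∑ l ∈ (rlb j).index,
        (rlb j).left l ⊗ₜ[R] ((rlb j).right l ⊗ₜ[R] rb.right j)) := (congrArg _ hCb).symm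
    _ = S b * S a := Eval3

end A1

section A2


variable {R : Type*} {A : Type*} [CommSemiring R] [Semiring A] [HopfAlgebra R A]

lemma frob_expansion (Λ : A) (lam : A →ₗ[R] R)
    (hΛ : ∀ h : A, h * Λ = counit (R := R) h • Λ)
    (hlamInt : ∀ h : A, (TensorProduct.lid R A)
      ((TensorProduct.map lam LinearMap.id) (comul (R := R) h)) = lam h • (1 : A))
    (hlamΛ : lam Λ = 1) (h : A) :
    h = antipode (R := R)
      (∑ j ∈ (ℛ R Λ).index, lam (h * (ℛ R Λ).left j) • (ℛ R Λ).right j) := by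
  classical
  set S : A →ₗ[R] A := antipode (R := R) with hS
  set rΛ := ℛ R Λ with hrΛ
  set rh := ℛ R h with hrh
  set r1 : (i : rh.ι) → Coalgebra.Repr R (rh.left i) (A × A) := fun i => ℛ R (rh.left i) with hr1
  set r2 : (i : rh.ι) → Coalgebra.Repr R (rh.right i) (A × A) := fun i => ℛ R (rh.right i) with hr2
  -- the auxiliary map T2 : A ⊗ A →ₗ A, x ⊗ y ↦ lam x • S y
  set T2 : A ⊗[R] A →ₗ[R] A :=
    (TensorProduct.lid R A).toLinearMap ∘ₗ TensorProduct.map lam S with hT2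
  have hT2app : ∀ (x y : A), T2 (x ⊗ₜ y) = lam x • S y := by
    intro x y; simp [hT2]
  have hT2Λ : T2 (comul (R := R) Λ) = 1 := by
    have h1 := hlamInt Λ
    rw [hlamΛ, one_smul, ← rΛ.eq] at h1
    simp only [map_sum, TensorProduct.map_tmul, LinearMap.id_coe, id_eq, lid_tmul] at h1
    rw [← rΛ.eq, map_sum]
    simp only [hT2app]
    calc ∑ j ∈ rΛ.index, lam (rΛ.left j) • S (rΛ.right j)
        = S (∑ j ∈ rΛ.index, lam (rΛ.left j) • rΛ.right j) := by
          rw [map_sum]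
          exact Finset.sum_congr rfl fun j _ => (map_smul S _ _).symm
      _ = 1 := by rw [h1]; exact antipode_one'
  -- Ω : (A ⊗ A) ⊗ A →ₗ A
  set Ω : (A ⊗[R] A) ⊗[R] A →ₗ[R] A :=
    mul' R A ∘ₗ TensorProduct.map T2 LinearMap.id with hΩ
  have hΩapp : ∀ (u : A ⊗[R] A) (w : A), Ω (u ⊗ₜ w) = T2 u * w := by
    intro u w; simp [hΩ, mul'_apply]
  -- the element W
  set W : (A ⊗[R] A) ⊗[R] A :=
    ∑ i ∈ rh.index, (comul (R := R) (rh.left i * Λ)) ⊗ₜ rh.right i with hW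
  have EvalA : W = (comul (R := R) Λ) ⊗ₜ h := by
    rw [hW]
    calc ∑ i ∈ rh.index, (comul (R := R) (rh.left i * Λ)) ⊗ₜ[R] rh.right i
        = ∑ i ∈ rh.index, (comul (R := R) Λ) ⊗ₜ[R]
            (counit (R := R) (rh.left i) • rh.right i) := by
          refine Finset.sum_congr rfl fun i _ => ?_
          rw [hΛ (rh.left i), map_smul, TensorProduct.smul_tmul]
      _ = (comul (R := R) Λ) ⊗ₜ[R] h := by
          rw [← TensorProduct.tmul_sum, sum_counit_smul_eq' rh]
  have E1 : Ω W = h := by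
    rw [EvalA, hΩapp, hT2Λ, one_mul]
  -- second evaluation of Ω W
  have E2 : Ω W = ∑ i ∈ rh.index, ∑ k ∈ (r1 i).index, ∑ j ∈ rΛ.index,
      lam ((r1 i).left k * rΛ.left j) •
        (S (rΛ.right j) * (S ((r1 i).right k) * rh.right i)) := by
    rw [hW, map_sum]
    refine Finset.sum_congr rfl fun i _ => ?_
    rw [hΩapp, Bialgebra.comul_mul, ← (r1 i).eq, ← rΛ.eq, Finset.sum_mul_sum]
    simp only [Algebra.TensorProduct.tmul_mul_tmul]
    rw [map_sum, Finset.sum_mul]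
    refine Finset.sum_congr rfl fun k _ => ?_
    rw [map_sum, Finset.sum_mul]
    refine Finset.sum_congr rfl fun j _ => ?_
    rw [hT2app, smul_mul_assoc]
    congr 1
    rw [hS, antipode_mul', mul_assoc]
  -- map Ξ for the coassociativity switch
  set Ξ : A ⊗[R] (A ⊗[R] A) →ₗ[R] A :=
    ∑ j ∈ rΛ.index, (TensorProduct.lid R A).toLinearMap ∘ₗ
      TensorProduct.map (lam ∘ₗ mulRight R (rΛ.left j))
        (mulLeft R (S (rΛ.right j)) ∘ₗ mul' R A ∘ₗ TensorProduct.map S LinearMap.id) with hΞ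
  have hΞapp : ∀ (u v w : A), Ξ (u ⊗ₜ (v ⊗ₜ w)) =
      ∑ j ∈ rΛ.index, lam (u * rΛ.left j) • (S (rΛ.right j) * (S v * w)) := by
    intro u v w
    simp [hΞ, LinearMap.sum_apply, TensorProduct.map_tmul, mul'_apply]
  have hC := sum_tmul_tmul_eq (R := R) rh r1 r2
  have E3 : Ξ (∑ i ∈ rh.index, ∑ k ∈ (r1 i).index,
      (r1 i).left k ⊗ₜ[R] ((r1 i).right k ⊗ₜ[R] rh.right i)) = Ω W := by
    rw [map_sum, E2]
    refine Finset.sum_congr rfl fun i _ => ?_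
    rw [map_sum]
    refine Finset.sum_congr rfl fun k _ => ?_
    rw [hΞapp]
  have E4 : Ξ (∑ i ∈ rh.index, ∑ k ∈ (r2 i).index,
      rh.left i ⊗ₜ[R] ((r2 i).left k ⊗ₜ[R] (r2 i).right k)) =
      S (∑ j ∈ rΛ.index, lam (h * rΛ.left j) • rΛ.right j) := by
    rw [map_sum]
    calc ∑ i ∈ rh.index, Ξ (∑ k ∈ (r2 i).index,
          rh.left i ⊗ₜ[R] ((r2 i).left k ⊗ₜ[R] (r2 i).right k))
        = ∑ i ∈ rh.index, ∑ j ∈ rΛ.index, counit (R := R) (rh.right i) •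
            (lam (rh.left i * rΛ.left j) • S (rΛ.right j)) := by
          refine Finset.sum_congr rfl fun i _ => ?_
          rw [map_sum]
          calc ∑ k ∈ (r2 i).index, Ξ (rh.left i ⊗ₜ[R] ((r2 i).left k ⊗ₜ[R] (r2 i).right k))
              = ∑ k ∈ (r2 i).index, ∑ j ∈ rΛ.index,
                  lam (rh.left i * rΛ.left j) •
                    (S (rΛ.right j) * (S ((r2 i).left k) * (r2 i).right k)) := by
                exact Finset.sum_congr rfl fun k _ => hΞapp _ _ _
            _ = ∑ j ∈ rΛ.index, lam (rh.left i * rΛ.left j) •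
                  (S (rΛ.right j) * (counit (R := R) (rh.right i) • 1)) := by
                rw [Finset.sum_comm]
                refine Finset.sum_congr rfl fun j _ => ?_
                rw [← Finset.smul_sum, ← Finset.mul_sum]
                rw [hS, sum_antipode_mul_eq_smul (r2 i)]
            _ = ∑ j ∈ rΛ.index, counit (R := R) (rh.right i) •
                  (lam (rh.left i * rΛ.left j) • S (rΛ.right j)) := by
                refine Finset.sum_congr rfl fun j _ => ?_
                rw [mul_smul_comm, mul_one, smul_comm]
      _ = ∑ j ∈ rΛ.index, lam (h * rΛ.left j) • S (rΛ.right j) := by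
          rw [Finset.sum_comm]
          refine Finset.sum_congr rfl fun j _ => ?_
          simp only [smul_smul, ← smul_assoc]
          rw [← Finset.sum_smul]
          congr 2
          calc ∑ i ∈ rh.index, counit (R := R) (rh.right i) * lam (rh.left i * rΛ.left j)
              = lam ((∑ i ∈ rh.index, counit (R := R) (rh.right i) • rh.left i) * rΛ.left j) := by
                rw [Finset.sum_mul, map_sum]
                exact Finset.sum_congr rfl fun i _ => by
                  rw [smul_mul_assoc, map_smul, smul_eq_mul]
            _ = lam (h * rΛ.left j) := by rw [sum_smul_counit_eq' rh]
      _ = S (∑ j ∈ rΛ.index, lam (h * rΛ.left j) • rΛ.right j) := by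
          rw [map_sum]
          exact Finset.sum_congr rfl fun j _ => (map_smul S _ _).symm
  calc h = Ω W := E1.symm
    _ = Ξ (∑ i ∈ rh.index, ∑ k ∈ (r1 i).index,
        (r1 i).left k ⊗ₜ[R] ((r1 i).right k ⊗ₜ[R] rh.right i)) := E3.symm
    _ = Ξ (∑ i ∈ rh.index, ∑ k ∈ (r2 i).index,
        rh.left i ⊗ₜ[R] ((r2 i).left k ⊗ₜ[R] (r2 i).right k)) := congrArg Ξ hC
    _ = antipode (R := R)
        (∑ j ∈ (ℛ R Λ).index, lam (h * (ℛ R Λ).left j) • (ℛ R Λ).right j) := E4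


variable {R : Type*} {A : Type*} [CommSemiring R] [Semiring A] [HopfAlgebra R A]

lemma antipode_surjective' (Λ : A) (lam : A →ₗ[R] R)
    (hΛ : ∀ h : A, h * Λ = counit (R := R) h • Λ)
    (hlamInt : ∀ h : A, (TensorProduct.lid R A)
      ((TensorProduct.map lam LinearMap.id) (comul (R := R) h)) = lam h • (1 : A))
    (hlamΛ : lam Λ = 1) :
    Function.Surjective ⇑(antipode (R := R) (A := A)) := fun h =>
  ⟨_, (frob_expansion Λ lam hΛ hlamInt hlamΛ h).symm⟩

lemma leftint_SS (Λ : A) (lam : A →ₗ[R] R)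
    (hΛ : ∀ h : A, h * Λ = counit (R := R) h • Λ)
    (hlamInt : ∀ h : A, (TensorProduct.lid R A)
      ((TensorProduct.map lam LinearMap.id) (comul (R := R) h)) = lam h • (1 : A))
    (hlamΛ : lam Λ = 1) (h : A) :
    h * (antipode (R := R) (antipode (R := R) Λ))
      = counit (R := R) h • antipode (R := R) (antipode (R := R) Λ) := by
  obtain ⟨x, hx⟩ := antipode_surjective' Λ lam hΛ hlamInt hlamΛ h
  obtain ⟨y, hy⟩ := antipode_surjective' Λ lam hΛ hlamInt hlamΛ x
  subst hy; subst hx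
  calc antipode (R := R) (antipode (R := R) y) * antipode (R := R) (antipode (R := R) Λ)
      = antipode (R := R) (antipode (R := R) Λ * antipode (R := R) y) :=
        (antipode_mul' _ _).symm
    _ = antipode (R := R) (antipode (R := R) (y * Λ)) := by rw [antipode_mul' y Λ]
    _ = counit (R := R) y • antipode (R := R) (antipode (R := R) Λ) := by
        rw [hΛ y, map_smul, map_smul]
    _ = counit (R := R) (antipode (R := R) (antipode (R := R) y)) •
          antipode (R := R) (antipode (R := R) Λ) := by
        rw [counit_antipode', counit_antipode']

end A2


-- semisimple: a square-zero left integral vanishes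
lemma left_int_self_zero {k H : Type*} [CommSemiring k] [Ring H] [Algebra k H]
    [IsSemisimpleRing H] (x : H) (ef : H → k)
    (hx : ∀ h : H, h * x = ef h • x) (hxx : x * x = 0) : x = 0 := by
  obtain ⟨J, hJ⟩ := exists_isCompl (Submodule.span H {x})
  have h1 : (1 : H) ∈ (Submodule.span H {x}) ⊔ J := by
    rw [hJ.sup_eq_top]; trivial
  obtain ⟨f, hf, g, hg, hfg⟩ := Submodule.mem_sup.mp h1
  obtain ⟨c, rfl⟩ := Submodule.mem_span_singleton.mp hf
  have hxf : x * (c • x) = 0 := by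
    rw [smul_eq_mul, hx c, mul_smul_comm, hxx, smul_zero]
  have hxg : x = x * g := by
    calc x = x * 1 := (mul_one x).symm
      _ = x * (c • x) + x * g := by rw [← hfg, mul_add]
      _ = x * g := by rw [hxf, zero_add]
  have hxJ : x ∈ J := by
    rw [hxg, ← smul_eq_mul]
    exact J.smul_mem x hg
  have hxspan : x ∈ Submodule.span H {x} := Submodule.mem_span_singleton_self x
  have := Submodule.disjoint_def.mp hJ.disjoint x hxspan hxJ
  exact this

section FieldCase
variable {k H : Type*} [Field k] [Ring H] [HopfAlgebra k H] [IsSemisimpleRing H]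

lemma counit_int_ne_zero (Λ : H) (lam : H →ₗ[k] k)
    (hΛ : ∀ h : H, h * Λ = counit (R := k) h • Λ)
    (hlamΛ : lam Λ = 1) : counit (R := k) Λ ≠ 0 := by
  intro h0
  have hxx : Λ * Λ = 0 := by rw [hΛ Λ, h0, zero_smul]
  have := left_int_self_zero Λ (counit (R := k)) hΛ hxx
  rw [this, map_zero] at hlamΛ
  exact zero_ne_one hlamΛ

lemma SS_fixed (Λ : H) (lam : H →ₗ[k] k)
    (hΛ : ∀ h : H, h * Λ = counit (R := k) h • Λ)
    (hlamInt : ∀ h : H, (TensorProduct.lid k H)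
      ((TensorProduct.map lam LinearMap.id) (comul (R := k) h)) = lam h • (1 : H))
    (hlamΛ : lam Λ = 1) :
    antipode (R := k) (antipode (R := k) Λ) = Λ := by
  have hne := counit_int_ne_zero Λ lam hΛ hlamΛ
  set c : k := (counit (R := k) Λ)⁻¹ with hc
  have hcne : c ≠ 0 := inv_ne_zero hne
  set e : H := c • Λ with he
  set e' : H := c • antipode (R := k) (antipode (R := k) Λ) with he'
  have hints : ∀ h : H, h * e = counit (R := k) h • e := by
    intro h; rw [he, mul_smul_comm, hΛ h, smul_comm]
  have hints' : ∀ h : H, h * e' = counit (R := k) h • e' := by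
    intro h
    rw [he', mul_smul_comm, leftint_SS Λ lam hΛ hlamInt hlamΛ h, smul_comm]
  have hεe : counit (R := k) e = 1 := by
    rw [he, map_smul, smul_eq_mul, hc, inv_mul_cancel₀ hne]
  have hεe' : counit (R := k) e' = 1 := by
    rw [he', map_smul, smul_eq_mul, counit_antipode', counit_antipode', hc,
      inv_mul_cancel₀ hne]
  set d : H := e - e' with hd
  have hintd : ∀ h : H, h * d = counit (R := k) h • d := by
    intro h; rw [hd, mul_sub, hints h, hints' h, smul_sub]
  have hdd : d * d = 0 := by
    rw [hd, sub_mul, mul_sub, mul_sub, hints e, hints' e, hints e', hints' e',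
      hεe, hεe']
    simp only [one_smul]
    abel
  have hd0 : d = 0 := left_int_self_zero d (counit (R := k)) hintd hdd
  have hee' : e = e' := by rwa [hd, sub_eq_zero] at hd0
  rw [he, he'] at hee'
  have := smul_right_injective H hcne hee'
  exact this.symm

end FieldCase



theorem semisimple_of_integral {k A : Type*} [Field k] [Ring A] [HopfAlgebra k A]
    (t : A) (ht1 : counit (R := k) t = 1)
    (htInt : ∀ a : A, a * t = counit (R := k) a • t) : IsSemisimpleRing A := by
  classical
  set S : A →ₗ[k] A := antipode (R := k) with hS
  set rt := ℛ k t with hrt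
  -- KEY identity : (x ⊗ 1) · e' = e' · (1 ⊗ x) where e' = ∑ lt ⊗ S rt
  have KEY : ∀ x : A,
      ∑ p ∈ rt.index, (x * rt.left p) ⊗ₜ[k] S (rt.right p)
        = ∑ p ∈ rt.index, rt.left p ⊗ₜ[k] (S (rt.right p) * x) := by
    intro x
    set rx := ℛ k x with hrx
    set rlx : (i : rx.ι) → Coalgebra.Repr k (rx.left i) (A × A) := fun i => ℛ k (rx.left i) with hrlx
    set rrx : (i : rx.ι) → Coalgebra.Repr k (rx.right i) (A × A) := fun i => ℛ k (rx.right i) with hrrx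
    have hC := sum_tmul_tmul_eq (R := k) rx rlx rrx
    set Θ : A ⊗[k] (A ⊗[k] A) →ₗ[k] A ⊗[k] A :=
      ∑ p ∈ rt.index, TensorProduct.map (mulRight k (rt.left p))
        (mul' k A ∘ₗ TensorProduct.map (S ∘ₗ mulRight k (rt.right p)) LinearMap.id) with hΘ
    have hΘapp : ∀ (u v w : A), Θ (u ⊗ₜ (v ⊗ₜ w)) =
        ∑ p ∈ rt.index, (u * rt.left p) ⊗ₜ[k] (S (v * rt.right p) * w) := by
      intro u v w
      simp [hΘ, LinearMap.sum_apply, TensorProduct.map_tmul, mul'_apply]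
    -- Θ on the right side of hC
    have hA : Θ (∑ i ∈ rx.index, ∑ k_1 ∈ (rrx i).index,
        rx.left i ⊗ₜ[k] ((rrx i).left k_1 ⊗ₜ[k] (rrx i).right k_1))
        = ∑ p ∈ rt.index, (x * rt.left p) ⊗ₜ[k] S (rt.right p) := by
      rw [map_sum]
      calc ∑ i ∈ rx.index, Θ (∑ k_1 ∈ (rrx i).index,
            rx.left i ⊗ₜ[k] ((rrx i).left k_1 ⊗ₜ[k] (rrx i).right k_1))
          = ∑ i ∈ rx.index, ∑ p ∈ rt.index, counit (R := k) (rx.right i) •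
              ((rx.left i * rt.left p) ⊗ₜ[k] S (rt.right p)) := by
            refine Finset.sum_congr rfl fun i _ => ?_
            rw [map_sum]
            calc ∑ k_1 ∈ (rrx i).index, Θ (rx.left i ⊗ₜ[k]
                  ((rrx i).left k_1 ⊗ₜ[k] (rrx i).right k_1))
                = ∑ k_1 ∈ (rrx i).index, ∑ p ∈ rt.index,
                    (rx.left i * rt.left p) ⊗ₜ[k]
                      ((S (rt.right p) * S ((rrx i).left k_1)) * (rrx i).right k_1) := by
                  refine Finset.sum_congr rfl fun k_1 _ => ?_
                  rw [hΘapp]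
                  exact Finset.sum_congr rfl fun p _ => by
                    rw [hS, antipode_mul']
              _ = ∑ p ∈ rt.index, counit (R := k) (rx.right i) •
                    ((rx.left i * rt.left p) ⊗ₜ[k] S (rt.right p)) := by
                  rw [Finset.sum_comm]
                  refine Finset.sum_congr rfl fun p _ => ?_
                  rw [← TensorProduct.tmul_sum]
                  simp only [mul_assoc]
                  rw [← Finset.mul_sum, hS, sum_antipode_mul_eq_smul (rrx i),
                    mul_smul_comm, mul_one, TensorProduct.tmul_smul]
        _ = ∑ p ∈ rt.index, (x * rt.left p) ⊗ₜ[k] S (rt.right p) := by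
            rw [Finset.sum_comm]
            refine Finset.sum_congr rfl fun p _ => ?_
            calc ∑ i ∈ rx.index, counit (R := k) (rx.right i) •
                  ((rx.left i * rt.left p) ⊗ₜ[k] S (rt.right p))
                = ((∑ i ∈ rx.index, counit (R := k) (rx.right i) • rx.left i) * rt.left p)
                    ⊗ₜ[k] S (rt.right p) := by
                  rw [Finset.sum_mul, TensorProduct.sum_tmul]
                  exact Finset.sum_congr rfl fun i _ => by
                    rw [smul_mul_assoc, TensorProduct.smul_tmul']
              _ = (x * rt.left p) ⊗ₜ[k] S (rt.right p) := by rw [sum_smul_counit_eq' rx]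
    -- Θ on the left side of hC
    have hB : Θ (∑ i ∈ rx.index, ∑ k_1 ∈ (rlx i).index,
        (rlx i).left k_1 ⊗ₜ[k] ((rlx i).right k_1 ⊗ₜ[k] rx.right i))
        = ∑ p ∈ rt.index, rt.left p ⊗ₜ[k] (S (rt.right p) * x) := by
      rw [map_sum]
      calc ∑ i ∈ rx.index, Θ (∑ k_1 ∈ (rlx i).index,
            (rlx i).left k_1 ⊗ₜ[k] ((rlx i).right k_1 ⊗ₜ[k] rx.right i))
          = ∑ i ∈ rx.index, (TensorProduct.map LinearMap.id
              (mulRight k (rx.right i) ∘ₗ S))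
              (comul (R := k) (rx.left i) * comul (R := k) t) := by
            refine Finset.sum_congr rfl fun i _ => ?_
            rw [map_sum, ← (rlx i).eq, ← rt.eq, Finset.sum_mul_sum]
            simp only [Algebra.TensorProduct.tmul_mul_tmul, map_sum,
              TensorProduct.map_tmul]
            refine Finset.sum_congr rfl fun k_1 _ => ?_
            rw [hΘapp]
            refine Finset.sum_congr rfl fun p _ => ?_
            simp
          _ = ∑ i ∈ rx.index, counit (R := k) (rx.left i) •
              (TensorProduct.map LinearMap.id (mulRight k (rx.right i) ∘ₗ S))
                (comul (R := k) t) := by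
            refine Finset.sum_congr rfl fun i _ => ?_
            rw [← Bialgebra.comul_mul, htInt (rx.left i), map_smul, map_smul]
          _ = ∑ i ∈ rx.index, ∑ p ∈ rt.index, rt.left p ⊗ₜ[k]
                (counit (R := k) (rx.left i) • (S (rt.right p) * rx.right i)) := by
            refine Finset.sum_congr rfl fun i _ => ?_
            rw [← rt.eq, map_sum, Finset.smul_sum]
            refine Finset.sum_congr rfl fun p _ => ?_
            rw [TensorProduct.map_tmul]
            simp
          _ = ∑ p ∈ rt.index, rt.left p ⊗ₜ[k] (S (rt.right p) *
              (∑ i ∈ rx.index, counit (R := k) (rx.left i) • rx.right i)) := by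
            rw [Finset.sum_comm]
            refine Finset.sum_congr rfl fun p _ => ?_
            rw [← TensorProduct.tmul_sum]
            congr 1
            rw [Finset.mul_sum]
            exact Finset.sum_congr rfl fun i _ => (mul_smul_comm _ _ _).symm
          _ = ∑ p ∈ rt.index, rt.left p ⊗ₜ[k] (S (rt.right p) * x) := by
            rw [sum_counit_smul_eq' rx]
    rw [← hA, ← hB, congrArg Θ hC]
  -- now build, for each left ideal I, an A-linear projection onto I
  refine { exists_isCompl := fun I => ?_ }
  set Ik : Submodule k A := I.restrictScalars k with hIk
  obtain ⟨Jk, hJk⟩ := Submodule.exists_isCompl Ik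
  set π : A →ₗ[k] A := Ik.subtype ∘ₗ Ik.linearProjOfIsCompl Jk hJk with hπ
  have hπmem : ∀ a : A, π a ∈ I := fun a => (Ik.linearProjOfIsCompl Jk hJk a).2
  have hπid : ∀ a ∈ I, π a = a := by
    intro a ha
    have : Ik.linearProjOfIsCompl Jk hJk a = ⟨a, ha⟩ :=
      Submodule.linearProjOfIsCompl_apply_left hJk ⟨a, ha⟩
    simp [hπ, this]
  set Pf : A → A := fun a => ∑ p ∈ rt.index, rt.left p * π (S (rt.right p) * a) with hPf
  have hPfmul : ∀ (x a : A), Pf (x * a) = x * Pf a := by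
    intro x a
    have h1 := congrArg (mul' k A ∘ₗ TensorProduct.map LinearMap.id (π ∘ₗ mulRight k a)) (KEY x)
    simp only [map_sum, LinearMap.comp_apply, TensorProduct.map_tmul, mul'_apply,
      LinearMap.id_coe, id_eq, mulRight_apply] at h1
    calc Pf (x * a) = ∑ p ∈ rt.index, rt.left p * π (S (rt.right p) * x * a) := by
          rw [hPf]
          exact Finset.sum_congr rfl fun p _ => by rw [mul_assoc]
      _ = ∑ p ∈ rt.index, x * rt.left p * π (S (rt.right p) * a) := h1.symm
      _ = x * Pf a := by
          rw [hPf, Finset.mul_sum]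
          exact Finset.sum_congr rfl fun p _ => by rw [mul_assoc]
  have hPfadd : ∀ (a b : A), Pf (a + b) = Pf a + Pf b := by
    intro a b
    rw [hPf, ← Finset.sum_add_distrib]
    exact Finset.sum_congr rfl fun p _ => by rw [mul_add, map_add, mul_add]
  have hPfmem : ∀ a : A, Pf a ∈ I := by
    intro a
    refine Submodule.sum_mem I fun p _ => ?_
    rw [← smul_eq_mul]
    exact Submodule.smul_mem I _ (hπmem _)
  have hPfid : ∀ a ∈ I, Pf a = a := by
    intro a ha
    have : ∀ p ∈ rt.index, rt.left p * π (S (rt.right p) * a)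
        = rt.left p * S (rt.right p) * a := by
      intro p _
      rw [hπid _ (by rw [← smul_eq_mul]; exact Submodule.smul_mem I _ ha), mul_assoc]
    rw [hPf]
    simp only []
    rw [Finset.sum_congr rfl this, ← Finset.sum_mul, hS, sum_mul_antipode_eq_smul rt, ht1,
      one_smul, one_mul]
  set PA : A →ₗ[A] A :=
    { toFun := Pf
      map_add' := hPfadd
      map_smul' := fun x a => by simpa [smul_eq_mul] using hPfmul x a } with hPA
  refine ⟨LinearMap.ker PA, ?_, ?_⟩
  · rw [Submodule.disjoint_def]
    intro a haI haK
    have : Pf a = 0 := haK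
    rw [hPfid a haI] at this
    exact this
  · rw [codisjoint_iff, eq_top_iff]
    intro a _
    rw [Submodule.mem_sup]
    refine ⟨Pf a, hPfmem a, a - Pf a, ?_, by abel⟩
    have : PA (a - Pf a) = 0 := by
      have h2 : PA (Pf a) = Pf a := hPfid _ (hPfmem a)
      rw [map_sub, h2]
      change Pf a - Pf a = 0
      abel
    exact this

theorem stmt3
    {k : Type*} [Field k] [IsAlgClosed k] {p : ℕ} [CharP k p] (hp : 0 < p)
    {H : Type*} [Ring H] [HopfAlgebra k H] [FiniteDimensional k H] [IsSemisimpleRing H]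
    (hpdim : Module.finrank k H < p ^ 2) (hpnd : ¬ p ∣ 2 * Module.finrank k H)
    (Λ : H) (hΛ : ∀ h : H, h * Λ = Coalgebra.counit (R := k) h • Λ)
    (lam : H →ₗ[k] k)
    (hlamInt : ∀ h : H, (TensorProduct.lid k H)
      ((TensorProduct.map lam LinearMap.id) (Coalgebra.comul (R := k) h)) = lam h • (1 : H))
    (hlamΛ : lam Λ = 1)
    (u : H) (hu : u = uElt k H Λ)
    (n : ℕ) [NeZero n] (hn : n = 2 * Module.finrank k H)
    {A : Type*} [Ring A] [HopfAlgebra k A]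
    (σ : ZMod n → H →ₗ[k] A)
    (hσone : σ 0 1 = 1)
    (hσmul : ∀ (κ ι : ZMod n) (a b : H), σ κ a * σ ι b
      = σ (κ + ι) (a * (⇑(HopfAlgebra.antipode (R := k) (A := H)))^[2 * κ.val] b))
    (hσcomul : ∀ (κ : ZMod n) (h : H),
      Coalgebra.comul (R := k) (σ κ h) = TensorProduct.map (σ κ) (σ κ) (Coalgebra.comul (R := k) h))
    (hσcounit : ∀ (κ : ZMod n) (h : H),
      Coalgebra.counit (R := k) (σ κ h) = Coalgebra.counit (R := k) h)
    (hσantipode : ∀ (κ : ZMod n) (h : H), HopfAlgebra.antipode (R := k) (σ κ h)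
      = σ (-κ) ((⇑(HopfAlgebra.antipode (R := k) (A := H)))^[2 * n + 1 - 2 * κ.val] h))
    (hσspan : ∀ a : A, ∃ c : ZMod n → H, a = ∑ κ : ZMod n, σ κ (c κ))
    (hσindep : ∀ c : ZMod n → H, ∑ κ : ZMod n, σ κ (c κ) = 0 → ∀ κ, c κ = 0)
    :
    (∀ a : A, a * ((n : k)⁻¹ • ∑ κ : ZMod n, σ κ Λ)
      = Coalgebra.counit (R := k) a • ((n : k)⁻¹ • ∑ κ : ZMod n, σ κ Λ)) ∧
    Coalgebra.counit (R := k) ((n : k)⁻¹ • ∑ κ : ZMod n, σ κ Λ) = Coalgebra.counit (R := k) Λ ∧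
    Coalgebra.counit (R := k) Λ ≠ 0 ∧
    IsSemisimpleRing A := by
  classical
  set T : A := ∑ κ : ZMod n, σ κ Λ with hT
  have hSSΛ : HopfAlgebra.antipode (R := k) (HopfAlgebra.antipode (R := k) Λ) = Λ :=
    SS_fixed Λ lam hΛ hlamInt hlamΛ
  have h2 : (⇑(HopfAlgebra.antipode (R := k) (A := H)))^[2] Λ = Λ := by
    show HopfAlgebra.antipode (R := k) (HopfAlgebra.antipode (R := k) Λ) = Λ
    exact hSSΛ
  have hiter : ∀ m : ℕ, (⇑(HopfAlgebra.antipode (R := k) (A := H)))^[2 * m] Λ = Λ := by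
    intro m
    rw [Function.iterate_mul]
    exact Function.iterate_fixed h2 m
  have hn0 : (n : k) ≠ 0 := by
    intro h0
    exact hpnd (hn ▸ (CharP.cast_eq_zero_iff k p n).mp h0)
  have part2 : Coalgebra.counit (R := k) ((n : k)⁻¹ • T) = Coalgebra.counit (R := k) Λ := by
    rw [map_smul, hT, map_sum]
    rw [Finset.sum_congr rfl (fun κ _ => hσcounit κ Λ), Finset.sum_const, Finset.card_univ,
      ZMod.card n, smul_eq_mul, nsmul_eq_mul, ← mul_assoc, inv_mul_cancel₀ hn0, one_mul]
  have part1 : ∀ a : A, a * ((n : k)⁻¹ • T)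
      = Coalgebra.counit (R := k) a • ((n : k)⁻¹ • T) := by
    intro a
    obtain ⟨c, hc⟩ := hσspan a
    subst hc
    have hεa : Coalgebra.counit (R := k) (∑ κ : ZMod n, σ κ (c κ))
        = ∑ κ : ZMod n, Coalgebra.counit (R := k) (c κ) := by
      rw [map_sum]; exact Finset.sum_congr rfl fun κ _ => hσcounit κ (c κ)
    have hmulT : (∑ κ : ZMod n, σ κ (c κ)) * T
        = (∑ κ : ZMod n, Coalgebra.counit (R := k) (c κ)) • T := by
      rw [hT, Finset.sum_mul, Finset.sum_smul]
      refine Finset.sum_congr rfl fun κ _ => ?_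
      calc σ κ (c κ) * ∑ ι : ZMod n, σ ι Λ
          = ∑ ι : ZMod n, σ (κ + ι) (c κ * Λ) := by
            rw [Finset.mul_sum]
            refine Finset.sum_congr rfl fun ι _ => ?_
            rw [hσmul κ ι (c κ) Λ, hiter κ.val]
        _ = ∑ ι : ZMod n, Coalgebra.counit (R := k) (c κ) • σ (κ + ι) Λ := by
            refine Finset.sum_congr rfl fun ι _ => ?_
            rw [hΛ (c κ), map_smul]
        _ = Coalgebra.counit (R := k) (c κ) • ∑ ι : ZMod n, σ ι Λ := by
            rw [← Finset.smul_sum]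
            congr 1
            exact Fintype.sum_equiv (Equiv.addLeft κ) _ _ (fun ι => rfl)
    calc (∑ κ : ZMod n, σ κ (c κ)) * ((n : k)⁻¹ • T)
        = (n : k)⁻¹ • ((∑ κ : ZMod n, σ κ (c κ)) * T) := mul_smul_comm _ _ _
      _ = (n : k)⁻¹ • ((∑ κ : ZMod n, Coalgebra.counit (R := k) (c κ)) • T) := by rw [hmulT]
      _ = Coalgebra.counit (R := k) (∑ κ : ZMod n, σ κ (c κ)) • ((n : k)⁻¹ • T) := by
          rw [hεa, smul_comm]
  have part3 : Coalgebra.counit (R := k) Λ ≠ 0 := counit_int_ne_zero Λ lam hΛ hlamΛ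
  have part4 : IsSemisimpleRing A := by
    apply semisimple_of_integral (k := k) (A := A) ((Coalgebra.counit (R := k) Λ)⁻¹ • ((n : k)⁻¹ • T))
    · rw [map_smul, part2, smul_eq_mul, inv_mul_cancel₀ part3]
    · intro a
      rw [mul_smul_comm, part1 a, smul_comm]
  exact ⟨part1, part2, part3, part4⟩

end
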